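/- arXiv:2312.02607 — 2 statements merged into one kernel-verified Lean document; each statement's English description precedes it below -/
import Mathlib

section
/- Let F be a finite field with q elements, let m, n be positive integers, let 1 ≤ t ≤ n, and let ẽ ∈ F^n have Hamming weight t. Then Σ_{H ∈ F^{m×n}} |{e ∈ F^n : wt(e) = t and H·e = H·ẽ}| = q^{mn} + (C(n,t)·(q−1)^t − 1)·q^{m(n−1)}. Equivalently, the expected number of weight-t solutions of H·e = H·ẽ over uniform H ∈ F^{m×n} is 1 + (C(n,t)·(q−1)^t − 1)/q^m. -/
open Finset

lemma card_mulVec_ker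
    (F : Type) [Field F] [Fintype F] [DecidableEq F]
    (q : ℕ) (hq : Fintype.card F = q)
    (m n : ℕ) {v : Fin n → F} (hv : v ≠ 0) :
    (Finset.univ.filter (fun H : Matrix (Fin m) (Fin n) F => H.mulVec v = 0)).card
      = q ^ (m * (n - 1)) := by
  classical
  obtain ⟨j₀, hj₀⟩ := Function.ne_iff.mp hv
  have hj₀ : v j₀ ≠ 0 := hj₀
  have hn : 1 ≤ n := Nat.pos_of_ne_zero (by rintro rfl; exact absurd (Subsingleton.elim v 0) hv)
  set f : Matrix (Fin m) (Fin n) F →+ (Fin m → F) :=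
    { toFun := fun H => H.mulVec v
      map_zero' := Matrix.zero_mulVec v
      map_add' := fun A B => Matrix.add_mulVec A B v } with hf
  have hsurj : Function.Surjective f := by
    intro y
    refine ⟨Matrix.of fun i j => if j = j₀ then y i * (v j₀)⁻¹ else 0, ?_⟩
    funext i
    simp [hf, Matrix.mulVec, dotProduct, ite_mul, Finset.sum_ite_eq', hj₀]
  have h1 : Nat.card (Matrix (Fin m) (Fin n) F)
      = Nat.card (Matrix (Fin m) (Fin n) F ⧸ f.ker) * Nat.card f.ker :=
    AddSubgroup.card_eq_card_quotient_mul_card_addSubgroup f.ker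
  have h2 : Nat.card (Matrix (Fin m) (Fin n) F ⧸ f.ker) = q ^ m := by
    rw [Nat.card_congr (QuotientAddGroup.quotientKerEquivOfSurjective f hsurj).toEquiv]
    simp [Nat.card_eq_fintype_card, Fintype.card_fun, hq]
  have h3 : Nat.card (Matrix (Fin m) (Fin n) F) = q ^ (m * n) := by
    simp only [Nat.card_eq_fintype_card, Matrix, Fintype.card_fun, hq]
    rw [← pow_mul, mul_comm]
    simp
  have h4 : (Finset.univ.filter (fun H : Matrix (Fin m) (Fin n) F => H.mulVec v = 0)).card
      = Nat.card f.ker := by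
    rw [Nat.card_eq_fintype_card, ← Fintype.card_subtype]
    apply Fintype.card_congr
    exact Equiv.subtypeEquivRight (fun H => by simp [hf, AddMonoidHom.mem_ker])
  rw [h4]
  have hq1 : 0 < q := hq ▸ Fintype.card_pos
  have key : q ^ m * Nat.card f.ker = q ^ (m * n) := by rw [← h2, ← h1, h3]
  have key2 : q ^ (m * n) = q ^ m * q ^ (m * (n - 1)) := by
    obtain ⟨k, rfl⟩ : ∃ k, n = k + 1 := ⟨n - 1, by omega⟩
    rw [← pow_add]
    congr 1
    simp [Nat.mul_succ]
    omega
  exact Nat.eq_of_mul_eq_mul_left (pow_pos hq1 m) (key.trans key2)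


lemma card_support_eq (F : Type) [Field F] [Fintype F] [DecidableEq F]
    (q : ℕ) (hq : Fintype.card F = q) (n : ℕ) (s : Finset (Fin n)) :
    (Finset.univ.filter (fun e : Fin n → F => Finset.univ.filter (fun i => e i ≠ 0) = s)).card
      = (q - 1) ^ s.card := by
  classical
  rw [← Fintype.card_subtype]
  have e1 : {e : Fin n → F // Finset.univ.filter (fun i => e i ≠ 0) = s}
      ≃ ∀ i : Fin n, {x : F // x ≠ 0 ↔ i ∈ s} := by
    refine (Equiv.subtypeEquivRight ?_).trans (Equiv.subtypePiEquivPi)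
    intro e
    rw [Finset.ext_iff]
    simp
  rw [Fintype.card_congr e1, Fintype.card_pi]
  have : ∀ i : Fin n, Fintype.card {x : F // x ≠ 0 ↔ i ∈ s}
      = if i ∈ s then q - 1 else 1 := by
    intro i
    by_cases hi : i ∈ s
    · simp only [hi, if_true, iff_true]
      rw [Fintype.card_subtype, Finset.filter_ne',
        Finset.card_erase_of_mem (Finset.mem_univ _), Finset.card_univ, hq]
    · simp only [hi, if_false, iff_false, not_not]
      exact Fintype.card_subtype_eq 0
  simp only [this]
  rw [Finset.prod_ite_mem, Finset.univ_inter, Finset.prod_const]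

lemma card_sphere (F : Type) [Field F] [Fintype F] [DecidableEq F]
    (q : ℕ) (hq : Fintype.card F = q) (n t : ℕ) (htn : t ≤ n) :
    (Finset.univ.filter
      (fun e : Fin n → F => (Finset.univ.filter (fun i => e i ≠ 0)).card = t)).card
      = n.choose t * (q - 1) ^ t := by
  classical
  rw [Finset.card_eq_sum_card_fiberwise
    (f := fun e : Fin n → F => Finset.univ.filter (fun i => e i ≠ 0))
    (s := Finset.univ.filter
      (fun e : Fin n → F => (Finset.univ.filter (fun i => e i ≠ 0)).card = t))
    (t := Finset.powersetCard t Finset.univ)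
    (fun e he => by simp only [Finset.mem_coe, Finset.mem_filter] at he
                    exact Finset.mem_powersetCard_univ.mpr he.2)]
  have hfib : ∀ s ∈ Finset.powersetCard t Finset.univ,
      ((Finset.univ.filter (fun e : Fin n → F => (Finset.univ.filter (fun i => e i ≠ 0)).card = t)).filter
        (fun e => Finset.univ.filter (fun i => e i ≠ 0) = s)).card = (q - 1) ^ t := by
    intro s hs
    have hsc : s.card = t := Finset.mem_powersetCard_univ.mp hs
    rw [Finset.filter_filter]
    have : (Finset.univ.filter (fun e : Fin n → F =>
        (Finset.univ.filter (fun i => e i ≠ 0)).card = t ∧ Finset.univ.filter (fun i => e i ≠ 0) = s))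
        = Finset.univ.filter (fun e : Fin n → F => Finset.univ.filter (fun i => e i ≠ 0) = s) := by
      ext e
      simp only [Finset.mem_filter, Finset.mem_univ, true_and]
      constructor
      · exact fun h => h.2
      · intro h; exact ⟨by rw [h, hsc], h⟩
    rw [this, card_support_eq F q hq n s, hsc]
  rw [Finset.sum_congr rfl hfib, Finset.sum_const, Finset.card_powersetCard,
    Finset.card_univ, Fintype.card_fin, smul_eq_mul]

lemma card_matrix' (F : Type) [Fintype F] (q : ℕ) (hq : Fintype.card F = q) (m n : ℕ) :
    Fintype.card (Matrix (Fin m) (Fin n) F) = q ^ (m * n) := by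
  rw [show Fintype.card (Matrix (Fin m) (Fin n) F) = Fintype.card (Fin m → Fin n → F) from
    Fintype.card_congr (Equiv.refl _)]
  simp only [Fintype.card_fun, hq]
  rw [← pow_mul, mul_comm]
  simp



/-- For a fixed vector `ẽ` of Hamming weight `t`, summing over all matrices
`H ∈ F^{m×n}` the number of weight-`t` vectors `e` with `H·e = H·ẽ` gives
`q^(mn) + (C(n,t)·(q-1)^t − 1)·q^(m(n-1))`: the expected number of solutions
of the syndrome decoding problem `SD(H, H·ẽ, t)` is
`1 + (C(n,t)·(q-1)^t − 1)/q^m`. -/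
theorem sum_number_of_decoding_solutions
    (F : Type) [Field F] [Fintype F] [DecidableEq F]
    (q : ℕ) (hq : Fintype.card F = q)
    (m n t : ℕ) (hm : 0 < m) (hn : 0 < n) (ht1 : 1 ≤ t) (htn : t ≤ n)
    (et : Fin n → F)
    (het : (Finset.univ.filter (fun i => et i ≠ 0)).card = t) :
    ∑ H : Matrix (Fin m) (Fin n) F,
        (Finset.univ.filter
          (fun e : Fin n → F =>
            (Finset.univ.filter (fun i => e i ≠ 0)).card = t ∧
              H.mulVec e = H.mulVec et)).card
      = q ^ (m * n) + (Nat.choose n t * (q - 1) ^ t - 1) * q ^ (m * (n - 1)) := by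
  classical
  set P : (Fin n → F) → Prop := fun e => (Finset.univ.filter (fun i => e i ≠ 0)).card = t
    with hP
  set N : (Fin n → F) → ℕ :=
    fun e => (Finset.univ.filter (fun H : Matrix (Fin m) (Fin n) F =>
      H.mulVec e = H.mulVec et)).card with hN
  set S : Finset (Fin n → F) := Finset.univ.filter P with hS
  have step1 : ∑ H : Matrix (Fin m) (Fin n) F,
      (Finset.univ.filter (fun e : Fin n → F => P e ∧ H.mulVec e = H.mulVec et)).card
      = ∑ e ∈ S, N e := by
    simp only [Finset.card_filter]
    rw [Finset.sum_comm]
    have key : ∀ e : Fin n → F,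
        (∑ H : Matrix (Fin m) (Fin n) F,
          if P e ∧ H.mulVec e = H.mulVec et then 1 else 0)
        = if P e then N e else 0 := by
      intro e
      by_cases hPe : P e
      · rw [if_pos hPe]
        have : N e = ∑ H : Matrix (Fin m) (Fin n) F,
            if H.mulVec e = H.mulVec et then 1 else 0 := Finset.card_filter _ _
        rw [this]
        refine Finset.sum_congr rfl fun H _ => ?_
        exact if_congr (and_iff_right hPe) rfl rfl
      · rw [if_neg hPe]
        refine Finset.sum_eq_zero fun H _ => ?_
        rw [if_neg (fun h => hPe h.1)]
    rw [Finset.sum_congr rfl (fun e _ => key e), ← Finset.sum_filter]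
  rw [step1]
  have hetS : et ∈ S := by simp [hS, hP, het]
  rw [← Finset.add_sum_erase S N hetS]
  have hNet : N et = q ^ (m * n) := by
    show (Finset.univ.filter (fun H : Matrix (Fin m) (Fin n) F =>
      H.mulVec et = H.mulVec et)).card = q ^ (m * n)
    have : (Finset.univ.filter (fun H : Matrix (Fin m) (Fin n) F =>
        H.mulVec et = H.mulVec et)) = Finset.univ :=
      Finset.filter_true_of_mem (fun _ _ => rfl)
    rw [this, Finset.card_univ, card_matrix' F q hq m n]
  have hNe : ∀ e ∈ S.erase et, N e = q ^ (m * (n - 1)) := by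
    intro e he
    obtain ⟨hne, heS⟩ := Finset.mem_erase.mp he
    have hsub : e - et ≠ 0 := sub_ne_zero.mpr hne
    show (Finset.univ.filter (fun H : Matrix (Fin m) (Fin n) F =>
      H.mulVec e = H.mulVec et)).card = q ^ (m * (n - 1))
    have : (Finset.univ.filter (fun H : Matrix (Fin m) (Fin n) F =>
        H.mulVec e = H.mulVec et))
        = Finset.univ.filter (fun H : Matrix (Fin m) (Fin n) F =>
        H.mulVec (e - et) = 0) := by
      apply Finset.filter_congr
      intro H _
      simp [Matrix.mulVec_sub, sub_eq_zero]
    rw [this]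
    exact card_mulVec_ker F q hq m n hsub
  rw [Finset.sum_congr rfl hNe, Finset.sum_const, smul_eq_mul,
    Finset.card_erase_of_mem hetS, hNet]
  have hScard : S.card = n.choose t * (q - 1) ^ t :=
    card_sphere F q hq n t htn
  rw [hScard]
end

section
/- Let F be a finite field with q elements, let m, n be positive integers with 1 ≤ t ≤ n, and let ẽ ∈ F^n have Hamming weight t. Then Σ_{H ∈ F^{m×n}} |{x ∈ F^n : x − ẽ ∈ ker(H) and wt(x) = t}| = q^{mn}·(1 − q^{−m}) + Σ_{H ∈ F^{m×n}} |{x ∈ ker(H) : wt(x) = t}|, where ker(H) = {c ∈ F^n : H·c = 0}. Equivalently, E_H[|C'_1(t)|] = 1 − 1/q^m + E_H[|C(t)|] for H uniform in F^{m×n}, where C(t) (resp. C'_1(t)) is the set of weight-t vectors of ker(H) (resp. of the coset ker(H) + ẽ). -/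
open Finset Matrix
lemma card_dot_ker (F : Type) [Field F] [Fintype F] [DecidableEq F]
    (n : ℕ) (hn : 0 < n) (v : Fin n → F) (hv : v ≠ 0) :
    Nat.card {x : Fin n → F // x ⬝ᵥ v = 0} = Fintype.card F ^ (n - 1) := by
  obtain ⟨j, hj⟩ := Function.ne_iff.mp hv
  set f : (Fin n → F) →+ F :=
    { toFun := fun x => x ⬝ᵥ v
      map_zero' := zero_dotProduct v
      map_add' := fun a b => add_dotProduct a b v } with hf
  have hsurj : Function.Surjective f := by
    intro c
    refine ⟨Pi.single j (c * (v j)⁻¹), ?_⟩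
    simp [hf, single_dotProduct, mul_assoc, inv_mul_cancel₀ hj]
  have hq : Nat.card ((Fin n → F) ⧸ f.ker) = Fintype.card F := by
    rw [Nat.card_congr (QuotientAddGroup.quotientKerEquivOfSurjective f hsurj).toEquiv]
    exact Nat.card_eq_fintype_card
  have hla := AddSubgroup.card_eq_card_quotient_mul_card_addSubgroup f.ker
  rw [hq, Nat.card_eq_fintype_card, Fintype.card_fun, Fintype.card_fin] at hla
  have hker : Nat.card {x : Fin n → F // x ⬝ᵥ v = 0} = Nat.card f.ker := rfl
  rw [hker]
  have hc0 : 0 < Fintype.card F := Fintype.card_pos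
  have : Fintype.card F ^ n = Fintype.card F ^ (n - 1) * Fintype.card F := by
    rw [← pow_succ, Nat.sub_add_cancel hn]
  rw [this] at hla
  rw [mul_comm (Fintype.card F ^ (n-1))] at hla
  exact (Nat.eq_of_mul_eq_mul_left hc0 hla).symm

lemma card_matrix_ker (F : Type) [Field F] [Fintype F] [DecidableEq F]
    (m n : ℕ) (hn : 0 < n) (v : Fin n → F) (hv : v ≠ 0) :
    (Finset.univ.filter (fun H : Matrix (Fin m) (Fin n) F => H.mulVec v = 0)).card
      = Fintype.card F ^ (m * (n - 1)) := by
  rw [← Fintype.card_subtype]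
  have e1 : {H : Matrix (Fin m) (Fin n) F // H.mulVec v = 0}
      ≃ (Fin m → {x : Fin n → F // x ⬝ᵥ v = 0}) := by
    refine (Equiv.subtypeEquivRight ?_).trans Equiv.subtypePiEquivPi
    intro H
    rw [funext_iff]
    rfl
  rw [Fintype.card_congr e1, Fintype.card_fun, Fintype.card_fin,
    ← Nat.card_eq_fintype_card, card_dot_ker F n hn v hv, ← pow_mul, Nat.mul_comm]


/-- For a fixed vector `ẽ` of Hamming weight `t`, the sum over all matrices
`H ∈ F^{m×n}` of the number of weight-`t` vectors in the coset `ker(H) + ẽ`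
equals `q^(mn) − q^(m(n-1))` plus the corresponding sum for the kernel itself:
`E_H[|C'_1(t)|] = 1 − 1/q^m + E_H[|C(t)|]`. -/
theorem sum_coset_weight_count_vs_kernel
    (F : Type) [Field F] [Fintype F] [DecidableEq F]
    (q : ℕ) (hq : Fintype.card F = q)
    (m n t : ℕ) (hm : 0 < m) (hn : 0 < n) (ht1 : 1 ≤ t) (htn : t ≤ n)
    (et : Fin n → F)
    (het : (Finset.univ.filter (fun i => et i ≠ 0)).card = t) :
    ∑ H : Matrix (Fin m) (Fin n) F,
        (Finset.univ.filter
          (fun x : Fin n → F => H.mulVec (x - et) = 0 ∧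
            (Finset.univ.filter (fun i => x i ≠ 0)).card = t)).card
      = (q ^ (m * n) - q ^ (m * (n - 1)))
        + ∑ H : Matrix (Fin m) (Fin n) F,
            (Finset.univ.filter
              (fun x : Fin n → F => H.mulVec x = 0 ∧
                (Finset.univ.filter (fun i => x i ≠ 0)).card = t)).card := by
  classical
  subst hq
  set Q := Fintype.card F with hQ
  have hQ1 : 1 ≤ Q := Fintype.card_pos
  set W : (Fin n → F) → Prop := fun x => (Finset.univ.filter (fun i => x i ≠ 0)).card = t
    with hW
  set S : Finset (Fin n → F) := Finset.univ.filter W with hS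
  -- swap the order of summation
  have key : ∀ g : (Fin n → F) → (Fin n → F),
      ∑ H : Matrix (Fin m) (Fin n) F,
          (Finset.univ.filter (fun x : Fin n → F => H.mulVec (g x) = 0 ∧ W x)).card
        = ∑ x ∈ S,
            (Finset.univ.filter
              (fun H : Matrix (Fin m) (Fin n) F => H.mulVec (g x) = 0)).card := by
    intro g
    simp_rw [Finset.card_filter]
    rw [Finset.sum_comm]
    rw [Finset.sum_filter]
    refine Finset.sum_congr rfl fun x _ => ?_
    by_cases hx : W x
    · rw [if_pos hx]
      exact Finset.sum_congr rfl fun H _ => if_congr (and_iff_left hx) rfl rfl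
    · rw [if_neg hx]
      exact Finset.sum_eq_zero fun H _ => by rw [if_neg (fun h => hx h.2)]
  have hmat : Fintype.card (Matrix (Fin m) (Fin n) F) = Q ^ (m * n) := by
    show Fintype.card (Fin m → Fin n → F) = Q ^ (m * n)
    simp [Fintype.card_fun, ← pow_mul, Nat.mul_comm, hQ]
  have lhs_eq : ∑ H : Matrix (Fin m) (Fin n) F,
      (Finset.univ.filter
        (fun x : Fin n → F => H.mulVec (x - et) = 0 ∧ W x)).card
      = Q ^ (m * n) + (S.card - 1) * Q ^ (m * (n - 1)) := by
    rw [key (fun x => x - et)]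
    have hetS : et ∈ S := by simp [hS, hW, het]
    rw [← Finset.add_sum_erase _ _ hetS]
    congr 1
    · simp [Matrix.mulVec_zero, ← hmat, Finset.card_univ]
    · rw [Finset.sum_congr rfl (fun x hx => card_matrix_ker F m n hn (x - et) ?_),
        Finset.sum_const, smul_eq_mul, Finset.card_erase_of_mem hetS]
      rw [sub_ne_zero]
      exact Finset.ne_of_mem_erase hx
  have rhs_eq : ∑ H : Matrix (Fin m) (Fin n) F,
      (Finset.univ.filter
        (fun x : Fin n → F => H.mulVec x = 0 ∧ W x)).card
      = S.card * Q ^ (m * (n - 1)) := by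
    rw [key (fun x => x)]
    rw [Finset.sum_congr rfl (fun x hx => card_matrix_ker F m n hn x ?_),
      Finset.sum_const, smul_eq_mul]
    intro h0
    subst h0
    simp only [hS, hW, Finset.mem_filter, Finset.mem_univ, true_and] at hx
    simp only [Pi.zero_apply, ne_eq, not_true_eq_false, not_false_eq_true,
      Finset.filter_false, Finset.card_empty] at hx
    omega
  rw [lhs_eq, rhs_eq]
  have hle : Q ^ (m * (n - 1)) ≤ Q ^ (m * n) :=
    Nat.pow_le_pow_right hQ1 (Nat.mul_le_mul_left m (Nat.sub_le n 1))
  have hS1 : 1 ≤ S.card := Finset.card_pos.mpr ⟨et, by simp [hS, hW, het]⟩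
  have hle2 : Q ^ (m * (n - 1)) ≤ S.card * Q ^ (m * (n - 1)) :=
    Nat.le_mul_of_pos_left _ hS1
  rw [Nat.sub_one_mul]
  omega
end
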